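/- arXiv:2504.07845 — 3 statements merged into one kernel-verified Lean document; each statement's English description precedes it below -/
import Mathlib

section
/- Let G be a tdlc group and (π, V) a smooth representation of G on a complex vector space. Then π is algebraically irreducible if and only if for every compact open subgroup K of G with V^K ≠ 0, the space V^K of K-invariant vectors is an algebraically irreducible module over the Hecke algebra H_K(G) of compactly supported K-bi-invariant functions on G. -/
open scoped ComplexInnerProductSpace

/-- A (strongly continuous) unitary representation of a topological group `G`
on a complex Hilbert space. -/
structure UnitaryRep (G : Type*) [Group G] [TopologicalSpace G] where
  /-- the underlying Hilbert space -/
  carrier : Type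
  [nacg : NormedAddCommGroup carrier]
  [ips : InnerProductSpace ℂ carrier]
  [cs : CompleteSpace carrier]
  /-- the action by unitary operators -/
  ρ : G → carrier ≃ₗᵢ[ℂ] carrier
  map_one' : ∀ w : carrier, ρ 1 w = w
  map_mul' : ∀ (g h : G) (w : carrier), ρ (g * h) w = ρ g (ρ h w)
  continuous_orbit : ∀ w : carrier, Continuous fun g => ρ g w

attribute [instance] UnitaryRep.nacg UnitaryRep.ips UnitaryRep.cs

open MeasureTheory

namespace UnitaryRep

variable {G : Type*} [Group G] [TopologicalSpace G]

/-- The matrix coefficient `g ↦ ⟪π(g)u, v⟫` of a unitary representation. -/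
noncomputable def mc (π : UnitaryRep G) (u v : π.carrier) : G → ℂ := fun g => ⟪π.ρ g u, v⟫

/-- Weak containment `π' ≺ π`: every matrix coefficient of `π'` is approximated,
uniformly on compact sets, by finite sums of matrix coefficients of `π`. -/
def WeakContained (π' π : UnitaryRep G) : Prop :=
  ∀ (u v : π'.carrier) (C : Set G), IsCompact C → ∀ ε > (0 : ℝ),
    ∃ (n : ℕ) (a b : Fin n → π.carrier),
      ∀ g ∈ C, ‖π'.mc u v g - ∑ i, π.mc (a i) (b i) g‖ ≤ ε

/-- Weak containment of a representation in a set of representations. -/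
def WeakContainedIn (π' : UnitaryRep G) (S : Set (UnitaryRep G)) : Prop :=
  ∀ (u v : π'.carrier) (C : Set G), IsCompact C → ∀ ε > (0 : ℝ),
    ∃ (n : ℕ) (σ : Fin n → UnitaryRep G), (∀ i, σ i ∈ S) ∧
      ∃ (a : (i : Fin n) → (σ i).carrier) (b : (i : Fin n) → (σ i).carrier),
        ∀ g ∈ C, ‖π'.mc u v g - ∑ i, (σ i).mc (a i) (b i) g‖ ≤ ε

/-- Topological irreducibility (together with nontriviality). -/
def IsIrreducible (π : UnitaryRep G) : Prop :=
  (∃ w : π.carrier, w ≠ 0) ∧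
    ∀ W : Submodule ℂ π.carrier, IsClosed (W : Set π.carrier) →
      (∀ g, ∀ w ∈ W, π.ρ g w ∈ W) → W = ⊥ ∨ W = ⊤

/-- The support of a unitary representation: all irreducible representations
weakly contained in it. -/
def supp (π : UnitaryRep G) : Set (UnitaryRep G) :=
  {σ | σ.IsIrreducible ∧ σ.WeakContained π}

/-- A set of irreducible representations is Fell-closed if it contains every
irreducible representation weakly contained in it. -/
def FellClosed (S : Set (UnitaryRep G)) : Prop :=
  ∀ σ : UnitaryRep G, σ.IsIrreducible → σ.WeakContainedIn S → σ ∈ S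

/-- The trivial (one-dimensional) representation. -/
noncomputable def trivialRep (G : Type*) [Group G] [TopologicalSpace G] : UnitaryRep G where
  carrier := ℂ
  ρ _ := LinearIsometryEquiv.refl ℂ ℂ
  map_one' _ := rfl
  map_mul' _ _ _ := rfl
  continuous_orbit _ := continuous_const

/-- `τ` is a realization of the Hilbertian tensor product `π₁ ⊗ π₂`. -/
def IsTensorRep (π₁ π₂ τ : UnitaryRep G) : Prop :=
  ∃ t : π₁.carrier → π₂.carrier → τ.carrier,
    (∀ u v u' v', ⟪t u v, t u' v'⟫ = ⟪u, u'⟫ * ⟪v, v'⟫) ∧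
    (∀ g u v, τ.ρ g (t u v) = t (π₁.ρ g u) (π₂.ρ g v)) ∧
    Dense (Submodule.span ℂ {w : τ.carrier | ∃ u v, w = t u v} : Set τ.carrier)

/-- Unitary equivalence of representations. -/
def UnitaryEquiv (π σ : UnitaryRep G) : Prop :=
  ∃ e : π.carrier ≃ₗᵢ[ℂ] σ.carrier, ∀ g w, e (π.ρ g w) = σ.ρ g (e w)

/-- `πb` is a realization of the conjugate (contragredient) representation of `π`. -/
def IsConjugateRep (π πb : UnitaryRep G) : Prop :=
  ∃ c : π.carrier → πb.carrier, Function.Bijective c ∧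
    (∀ u v, c (u + v) = c u + c v) ∧
    (∀ (a : ℂ) (u : π.carrier), c (a • u) = (starRingEnd ℂ) a • c u) ∧
    (∀ u v, ⟪c u, c v⟫ = (starRingEnd ℂ) ⟪u, v⟫) ∧
    (∀ g u, πb.ρ g (c u) = c (π.ρ g u))

/-- Restriction of a representation to a subgroup. -/
noncomputable def res (π : UnitaryRep G) (Γ : Subgroup G) : UnitaryRep Γ where
  carrier := π.carrier
  ρ γ := π.ρ γ
  map_one' w := π.map_one' w
  map_mul' g h w := π.map_mul' g h w
  continuous_orbit w := (π.continuous_orbit w).comp continuous_subtype_val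

/-- Membership in `Ĝ_p`: an irreducible representation with a dense subspace of
vectors whose matrix coefficients lie in `L^{p+ε}(G)` for every `ε > 0`. -/
def MemGhat [MeasurableSpace G] (π : UnitaryRep G) (p : ℝ) (μ : Measure G) : Prop :=
  π.IsIrreducible ∧
    ∃ H₀ : Submodule ℂ π.carrier, Dense (H₀ : Set π.carrier) ∧
      ∀ u ∈ H₀, ∀ v ∈ H₀, ∀ ε > (0 : ℝ),
        MemLp (π.mc u v) (ENNReal.ofReal (p + ε)) μ

end UnitaryRep


/-- The Hecke algebra `H_K(G)` of compactly supported `K`-bi-invariant functions,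
as a set of functions. -/
def heckeSet {G : Type*} [Group G] [TopologicalSpace G] (K : Subgroup G) : Set (G → ℂ) :=
  {f | HasCompactSupport f ∧ ∀ k₁ ∈ K, ∀ k₂ ∈ K, ∀ g : G, f (k₁ * g * k₂) = f g}

/-- The submodule of `K`-invariant vectors of a (not necessarily topological)
representation. -/
def fixedSub {G V : Type*} [Group G] [AddCommGroup V] [Module ℂ V]
    (π : G →* (V →ₗ[ℂ] V)) (K : Subgroup G) : Submodule ℂ V where
  carrier := {v | ∀ k ∈ K, π k v = v}
  add_mem' := by
    intro a b ha hb k hk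
    simp [map_add, ha k hk, hb k hk]
  zero_mem' := by
    intro k hk
    simp
  smul_mem' := by
    intro c v hv k hk
    simp [_root_.map_smul, hv k hk]

/-- The action of a compactly supported `K`-bi-invariant function on a `K`-invariant
vector, as a finite sum over the cosets `G ⧸ K` (normalized Haar measure giving `K`
mass one). -/
noncomputable def heckeAct {G V : Type*} [Group G] [AddCommGroup V] [Module ℂ V]
    (π : G →* (V →ₗ[ℂ] V)) (K : Subgroup G) (f : G → ℂ) (v : V) : V :=
  ∑ᶠ c : G ⧸ K, f (Quotient.out c) • π (Quotient.out c) v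

section VanDantzig
open scoped Pointwise

variable {G : Type*} [Group G] [TopologicalSpace G] [IsTopologicalGroup G]

/-- van Dantzig: in a locally compact, totally disconnected group, every neighborhood of 1
contains a compact open subgroup. -/
theorem exists_compactOpen_subgroup [LocallyCompactSpace G] [TotallyDisconnectedSpace G]
    {O : Set G} (hO : IsOpen O) (h1 : (1 : G) ∈ O) :
    ∃ K : Subgroup G, IsOpen (K : Set G) ∧ IsCompact (K : Set G) ∧ (K : Set G) ⊆ O := by
  have hT1 : T1Space G := IsTopologicalGroup.t1Space G
    (by rw [← totallyDisconnectedSpace_iff_connectedComponent_singleton.mp ‹_› (1:G)]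
        exact isClosed_connectedComponent)
  have hT2 : T2Space G := IsTopologicalGroup.t2Space_iff_one_closed.mpr isClosed_singleton
  obtain ⟨s, hs, h1s, hsO⟩ := exists_compact_subset hO h1
  obtain ⟨V, hVclopen, h1V, hVs⟩ :=
    (loc_compact_Haus_tot_disc_of_zero_dim (H := G)).mem_nhds_iff.mp
      (isOpen_interior.mem_nhds h1s)
  have hVcomp : IsCompact V := hs.of_isClosed_subset hVclopen.isClosed (hVs.trans interior_subset)
  obtain ⟨U, hU, hUV⟩ := compact_open_separated_mul_left hVcomp hVclopen.isOpen subset_rfl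
  set K : Subgroup G := MulAction.stabilizer G V with hK
  have hsub : U ∩ U⁻¹ ⊆ (K : Set G) := by
    intro g hg
    have h₁ : g • V ⊆ V := by
      rintro x ⟨v, hv, rfl⟩
      exact hUV (Set.mul_mem_mul hg.1 hv)
    have h₂ : g⁻¹ • V ⊆ V := by
      rintro x ⟨v, hv, rfl⟩
      exact hUV (Set.mul_mem_mul hg.2 hv)
    have h₃ : V ⊆ g • V := by
      intro v hv
      have := Set.smul_mem_smul_set (a := g) (h₂ (Set.smul_mem_smul_set (a := g⁻¹) hv))
      simpa using this
    exact subset_antisymm h₁ h₃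
  have hKopen : IsOpen (K : Set G) := by
    refine Subgroup.isOpen_of_mem_nhds (g := 1) K (Filter.mem_of_superset ?_ hsub)
    exact Filter.inter_mem hU (inv_mem_nhds_one G hU)
  have hKV : (K : Set G) ⊆ V := by
    intro g hg
    have : g • (1:G) ∈ g • V := Set.smul_mem_smul_set h1V
    rw [show g • V = V from hg] at this
    simpa using this
  refine ⟨K, hKopen, ?_, fun x hx => hsO (interior_subset (hVs (hKV hx)))⟩
  exact hVcomp.of_isClosed_subset (K.isClosed_of_isOpen hKopen) hKV

end VanDantzig

section Machinery

variable {G V : Type*} [Group G] [AddCommGroup V] [Module ℂ V]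

/-- The stabilizer of a vector under a representation. -/
def stabSub (π : G →* (V →ₗ[ℂ] V)) (v : V) : Subgroup G where
  carrier := {g | π g v = v}
  one_mem' := by simp
  mul_mem' := by
    intro a b ha hb
    simp only [Set.mem_setOf_eq] at *
    rw [map_mul, Module.End.mul_apply, hb, ha]
  inv_mem' := by
    intro a ha
    simp only [Set.mem_setOf_eq] at *
    conv_lhs => rw [← ha, ← Module.End.mul_apply, ← map_mul, inv_mul_cancel, map_one,
      Module.End.one_apply]

/-- Sum of `π g v` over a quotient of a subgroup. -/
noncomputable def qsum (π : G →* (V →ₗ[ℂ] V)) (K : Subgroup G) (s : Subgroup K) (v : V) : V :=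
  ∑ᶠ c : K ⧸ s, π (Quotient.out c : K) v

/-- Normalized average. -/
noncomputable def qavg (π : G →* (V →ₗ[ℂ] V)) (K : Subgroup G) (s : Subgroup K) (v : V) : V :=
  (Nat.card (K ⧸ s) : ℂ)⁻¹ • qsum π K s v

lemma pi_out_mk (π : G →* (V →ₗ[ℂ] V)) {K : Subgroup G} {s : Subgroup K} {v : V}
    (hfix : ∀ x : K, x ∈ s → π x v = v) (x : K) :
    π ((Quotient.out (QuotientGroup.mk x : K ⧸ s) : K) : G) v = π (x : G) v := by
  have h : (QuotientGroup.mk (Quotient.out (QuotientGroup.mk x : K ⧸ s)) : K ⧸ s)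
      = QuotientGroup.mk x := Quotient.out_eq _
  rw [QuotientGroup.eq] at h
  have hx : (x : K) = Quotient.out (QuotientGroup.mk x : K ⧸ s) *
      ((Quotient.out (QuotientGroup.mk x : K ⧸ s))⁻¹ * x) := by group
  conv_rhs => rw [hx]
  rw [Subgroup.coe_mul, map_mul, Module.End.mul_apply, hfix _ h]

lemma qsum_apply_smul (π : G →* (V →ₗ[ℂ] V)) {K : Subgroup G} {s : Subgroup K} {v : V}
    [Finite (K ⧸ s)] (hfix : ∀ x : K, x ∈ s → π x v = v) (k : K) :
    π (k : G) (qsum π K s v) = qsum π K s v := by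
  unfold qsum
  have hmap := AddMonoidHom.map_finsum (π (k : G)).toAddMonoidHom
    (f := fun c : K ⧸ s => π ((Quotient.out c : K) : G) v) (Set.toFinite _)
  simp only [LinearMap.toAddMonoidHom_coe] at hmap
  rw [hmap]
  have key : ∀ c : K ⧸ s, π (k : G) (π ((Quotient.out c : K) : G) v)
      = π ((Quotient.out (k • c) : K) : G) v := by
    intro c
    induction c using Quotient.inductionOn with
    | h x =>
      have h1 : (k • (QuotientGroup.mk x : K ⧸ s)) = QuotientGroup.mk (k * x) := rfl
      have h2 : (Quotient.mk _ x : K ⧸ s) = QuotientGroup.mk x := rfl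
      rw [h2, h1, pi_out_mk π hfix (k * x), pi_out_mk π hfix x, Subgroup.coe_mul, map_mul,
        Module.End.mul_apply]
  rw [finsum_congr key]
  exact finsum_comp_equiv (MulAction.toPerm k)
    (f := fun c : K ⧸ s => π ((Quotient.out c : K) : G) v)

lemma qsum_refine (π : G →* (V →ₗ[ℂ] V)) {K : Subgroup G} {s t : Subgroup K} {v : V}
    (hst : s ≤ t) [Finite (K ⧸ s)] [Finite (K ⧸ t)]
    (hfix : ∀ x : K, x ∈ t → π x v = v) :
    qsum π K s v = Nat.card (t ⧸ s.subgroupOf t) • qsum π K t v := by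
  set e := Subgroup.quotientEquivProdOfLE hst with he
  haveI : Finite ((K ⧸ t) × (t ⧸ s.subgroupOf t)) := Finite.of_equiv _ e
  haveI : Finite (t ⧸ s.subgroupOf t) := Finite.prod_right (K ⧸ t)
  have hfix' : ∀ x : K, x ∈ s → π x v = v := fun x hx => hfix x (hst hx)
  have key : ∀ c : K ⧸ s, π ((Quotient.out c : K) : G) v
      = π ((Quotient.out ((e c).1) : K) : G) v := by
    intro c
    induction c using Quotient.inductionOn with
    | h x =>
      have h2 : (Quotient.mk _ x : K ⧸ s) = QuotientGroup.mk x := rfl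
      have h1 : (e (QuotientGroup.mk x)).1 = (QuotientGroup.mk x : K ⧸ t) := rfl
      rw [h2, h1, pi_out_mk π hfix' x, pi_out_mk π hfix x]
  unfold qsum
  rw [finsum_congr key]
  refine (finsum_comp_equiv e
    (f := fun p : (K ⧸ t) × (t ⧸ s.subgroupOf t) => π ((Quotient.out p.1 : K) : G) v)).trans ?_
  haveI := Fintype.ofFinite (K ⧸ t)
  haveI := Fintype.ofFinite (t ⧸ s.subgroupOf t)
  rw [finsum_eq_sum_of_fintype, finsum_eq_sum_of_fintype]
  refine (Fintype.sum_prod_type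
    (f := fun p : (K ⧸ t) × (t ⧸ s.subgroupOf t) => π ((Quotient.out p.1 : K) : G) v)).trans ?_
  rw [Finset.smul_sum]
  refine Finset.sum_congr rfl fun d _ => ?_
  show ∑ _y : t ⧸ s.subgroupOf t, (π ((Quotient.out d : K) : G)) v = _
  rw [Finset.sum_const, Finset.card_univ, Nat.card_eq_fintype_card]

lemma qavg_refine (π : G →* (V →ₗ[ℂ] V)) {K : Subgroup G} {s t : Subgroup K} {v : V}
    (hst : s ≤ t) [Finite (K ⧸ s)] [Finite (K ⧸ t)]
    (hfix : ∀ x : K, x ∈ t → π x v = v) :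
    qavg π K s v = qavg π K t v := by
  haveI : Finite ((K ⧸ t) × (t ⧸ s.subgroupOf t)) :=
    Finite.of_equiv _ (Subgroup.quotientEquivProdOfLE hst)
  haveI : Finite (t ⧸ s.subgroupOf t) := Finite.prod_right (K ⧸ t)
  have hcard : Nat.card (K ⧸ s) = Nat.card (K ⧸ t) * Nat.card (t ⧸ s.subgroupOf t) := by
    rw [Nat.card_congr (Subgroup.quotientEquivProdOfLE hst), Nat.card_prod]
  have hm : (Nat.card (t ⧸ s.subgroupOf t) : ℂ) ≠ 0 := by
    exact_mod_cast (Nat.card_pos (α := t ⧸ s.subgroupOf t)).ne'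
  unfold qavg
  rw [qsum_refine π hst hfix, hcard]
  push_cast
  rw [mul_inv, (Nat.cast_smul_eq_nsmul ℂ _ _).symm, smul_smul, mul_assoc, inv_mul_cancel₀ hm, mul_one]


section Kavg

variable (π : G →* (V →ₗ[ℂ] V)) [TopologicalSpace G] [IsTopologicalGroup G]

/-- Canonical average over `K` of a smooth vector. -/
noncomputable def kavg (K : Subgroup G) (v : V) : V :=
  qavg π K ((stabSub π v).subgroupOf K) v

variable {K : Subgroup G}

lemma subgroupOf_isOpen {L : Subgroup G} (hL : IsOpen (L : Set G)) :
    IsOpen ((L.subgroupOf K : Subgroup K) : Set K) := by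
  have : ((L.subgroupOf K : Subgroup K) : Set K) = Subtype.val ⁻¹' (L : Set G) := rfl
  rw [this]; exact hL.preimage continuous_subtype_val

lemma finQuot (hKc : IsCompact (K : Set G)) {s : Subgroup K} (hs : IsOpen (s : Set K)) :
    Finite (K ⧸ s) := by
  haveI : CompactSpace K := isCompact_iff_compactSpace.mp hKc
  exact Subgroup.quotient_finite_of_isOpen s hs

variable (hKc : IsCompact (K : Set G)) (hsm : ∀ v : V, IsOpen {g : G | π g v = v})

include hKc hsm

lemma finStab (v : V) : Finite (K ⧸ (stabSub π v).subgroupOf K) := by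
  exact finQuot hKc (subgroupOf_isOpen (hsm v))

omit hKc hsm in
lemma stab_fix (v : V) : ∀ x : K, x ∈ (stabSub π v).subgroupOf K → π (x : G) v = v :=
  fun x hx => Subgroup.mem_subgroupOf.mp hx

lemma kavg_indep {s : Subgroup K} (hs : IsOpen (s : Set K)) {v : V}
    (hfix : ∀ x : K, x ∈ s → π (x : G) v = v) :
    qavg π K s v = kavg π K v := by
  haveI := finQuot hKc hs
  haveI := finStab π hKc hsm v
  exact qavg_refine π (fun x hx => Subgroup.mem_subgroupOf.mpr (hfix x hx)) (stab_fix π v)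

lemma kavg_mem_fixed (v : V) : kavg π K v ∈ fixedSub π K := by
  haveI := finStab π hKc hsm v
  intro k hk
  unfold kavg qavg
  rw [_root_.map_smul, qsum_apply_smul π (stab_fix π v) ⟨k, hk⟩]

lemma kavg_of_mem_fixed {v : V} (hv : v ∈ fixedSub π K) : kavg π K v = v := by
  haveI := finStab π hKc hsm v
  haveI := Fintype.ofFinite (K ⧸ (stabSub π v).subgroupOf K)
  haveI : Nonempty (K ⧸ (stabSub π v).subgroupOf K) := ⟨QuotientGroup.mk 1⟩
  unfold kavg qavg qsum
  have : ∀ c : K ⧸ (stabSub π v).subgroupOf K, π ((Quotient.out c : K) : G) v = v :=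
    fun c => hv _ (Quotient.out c : K).2
  rw [finsum_congr this, finsum_eq_sum_of_fintype, Finset.sum_const, Finset.card_univ,
    ← Nat.card_eq_fintype_card, ← Nat.cast_smul_eq_nsmul ℂ, smul_smul,
    inv_mul_cancel₀ (by exact_mod_cast (Nat.card_pos).ne'), one_smul]

lemma kavg_add (u v : V) : kavg π K (u + v) = kavg π K u + kavg π K v := by
  set s : Subgroup K := ((stabSub π u) ⊓ (stabSub π v)).subgroupOf K with hs
  have hso : IsOpen (s : Set K) := subgroupOf_isOpen ((hsm u).inter (hsm v))
  haveI := finQuot hKc hso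
  have hfixu : ∀ x : K, x ∈ s → π (x : G) u = u :=
    fun x hx => (Subgroup.mem_subgroupOf.mp hx).1
  have hfixv : ∀ x : K, x ∈ s → π (x : G) v = v :=
    fun x hx => (Subgroup.mem_subgroupOf.mp hx).2
  have hfixuv : ∀ x : K, x ∈ s → π (x : G) (u + v) = u + v := by
    intro x hx; rw [map_add, hfixu x hx, hfixv x hx]
  rw [← kavg_indep π hKc hsm hso hfixu, ← kavg_indep π hKc hsm hso hfixv,
    ← kavg_indep π hKc hsm hso hfixuv]
  unfold qavg qsum
  rw [← smul_add]
  congr 1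
  have : ∀ c : K ⧸ s, π ((Quotient.out c : K) : G) (u + v)
      = π ((Quotient.out c : K) : G) u + π ((Quotient.out c : K) : G) v :=
    fun c => map_add _ _ _
  rw [finsum_congr this, finsum_add_distrib (Set.toFinite _) (Set.toFinite _)]

lemma kavg_smul (a : ℂ) (v : V) : kavg π K (a • v) = a • kavg π K v := by
  set s : Subgroup K := (stabSub π v).subgroupOf K with hs
  have hso : IsOpen (s : Set K) := subgroupOf_isOpen (hsm v)
  haveI := finQuot hKc hso
  have hfixv : ∀ x : K, x ∈ s → π (x : G) v = v := stab_fix π v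
  have hfixav : ∀ x : K, x ∈ s → π (x : G) (a • v) = a • v := by
    intro x hx; rw [_root_.map_smul, hfixv x hx]
  rw [← kavg_indep π hKc hsm hso hfixv, ← kavg_indep π hKc hsm hso hfixav]
  unfold qavg qsum
  have : ∀ c : K ⧸ s, π ((Quotient.out c : K) : G) (a • v)
      = a • π ((Quotient.out c : K) : G) v := fun c => _root_.map_smul _ _ _
  rw [finsum_congr this, ← smul_finsum' a (Set.toFinite _), smul_comm]

lemma kavg_zero : kavg π K (0 : V) = 0 := by
  have := kavg_smul π hKc hsm 0 (0 : V)
  simpa using this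

end Kavg

/-! ### Hecke action -/


section Hecke

variable [TopologicalSpace G] [IsTopologicalGroup G] (π : G →* (V →ₗ[ℂ] V))
variable {K : Subgroup G}

lemma finite_out_mem (hKo : IsOpen (K : Set G)) {C : Set G} (hC : IsCompact C) :
    {c : G ⧸ K | Quotient.out c ∈ C}.Finite := by
  haveI : DiscreteTopology (G ⧸ K) := QuotientGroup.discreteTopology hKo
  have h1 : {c : G ⧸ K | Quotient.out c ∈ C} ⊆ QuotientGroup.mk '' C :=
    fun c hc => ⟨_, hc, Quotient.out_eq c⟩
  refine Set.Finite.subset ?_ h1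
  exact (hC.image continuous_quotient_mk').finite_of_discrete

lemma hecke_support_finite (hKo : IsOpen (K : Set G)) {f : G → ℂ} (hf : HasCompactSupport f)
    (v : V) :
    (Function.support fun c : G ⧸ K => f (Quotient.out c) • π (Quotient.out c) v).Finite := by
  refine (finite_out_mem hKo hf).subset ?_
  intro c hc
  have : f (Quotient.out c) ≠ 0 := by
    intro h0; apply hc; simp [h0]
  exact subset_tsupport f this

/-- The Hecke action maps `K`-invariant vectors to `K`-invariant vectors. -/
lemma heckeAct_mem_fixed (hKo : IsOpen (K : Set G)) {f : G → ℂ} (hf : f ∈ heckeSet K)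
    {v : V} (hv : v ∈ fixedSub π K) : heckeAct π K f v ∈ fixedSub π K := by
  intro k hk
  unfold heckeAct
  have hfin := hecke_support_finite π hKo hf.1 v
  have hmap := AddMonoidHom.map_finsum (π k).toAddMonoidHom
    (f := fun c : G ⧸ K => f (Quotient.out c) • π (Quotient.out c) v) hfin
  simp only [LinearMap.toAddMonoidHom_coe] at hmap
  rw [hmap]
  have key : ∀ c : G ⧸ K,
      π k (f (Quotient.out c) • π (Quotient.out c) v)
      = f (Quotient.out (k • c)) • π (Quotient.out (k • c)) v := by
    intro c
    -- `Quotient.out (k • c) = k * Quotient.out c * κ` for some `κ ∈ K`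
    have ha : (QuotientGroup.mk (Quotient.out (k • c)) : G ⧸ K) = k • c := Quotient.out_eq _
    have hb : (QuotientGroup.mk (k * Quotient.out c) : G ⧸ K) = k • c := by
      conv_rhs => rw [← Quotient.out_eq c]
      rfl
    have h1 := ha.trans hb.symm
    rw [QuotientGroup.eq] at h1
    -- h1 : (out (k•c))⁻¹ * (k * out c) ∈ K
    set κ : G := (k * Quotient.out c)⁻¹ * Quotient.out (k • c) with hκ
    have hκK : κ ∈ K := by
      rw [hκ]
      have := K.inv_mem h1
      simpa [mul_assoc, mul_inv_rev] using this
    have hout : Quotient.out (k • c) = 1 * (k * Quotient.out c) * κ := by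
      rw [hκ]; group
    rw [hout, hf.2 1 K.one_mem κ hκK (k * Quotient.out c)]
    have hfk : f (k * Quotient.out c) = f (Quotient.out c) := by
      have := hf.2 k hk 1 K.one_mem (Quotient.out c)
      simpa using this
    rw [hfk, _root_.map_smul]
    congr 1
    rw [map_mul, map_mul, map_mul]
    simp only [Module.End.mul_apply, map_one, Module.End.one_apply]
    rw [hv κ hκK]
  rw [finsum_congr key]
  exact finsum_comp_equiv (MulAction.toPerm k)
    (f := fun c : G ⧸ K => f (Quotient.out c) • π (Quotient.out c) v)

end Hecke

section Link

variable [TopologicalSpace G] [IsTopologicalGroup G] (π : G →* (V →ₗ[ℂ] V))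
variable {K : Subgroup G}

/-- The double coset `KgK`. -/
def dcoset (K : Subgroup G) (g : G) : Set G := {x : G | ∃ k₁ ∈ K, ∃ k₂ ∈ K, x = k₁ * g * k₂}

lemma indicator_mem_heckeSet [T2Space G] (hKc : IsCompact (K : Set G)) (g : G) :
    (dcoset K g).indicator (fun _ => (1 : ℂ)) ∈ heckeSet K := by
  have hDcomp : IsCompact (dcoset K g) := by
    have : dcoset K g = (fun p : G × G => p.1 * g * p.2) '' ((K : Set G) ×ˢ (K : Set G)) := by
      ext x
      constructor
      · rintro ⟨k₁, hk₁, k₂, hk₂, rfl⟩; exact ⟨(k₁, k₂), ⟨hk₁, hk₂⟩, rfl⟩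
      · rintro ⟨⟨k₁, k₂⟩, ⟨hk₁, hk₂⟩, rfl⟩; exact ⟨k₁, hk₁, k₂, hk₂, rfl⟩
    rw [this]
    exact (hKc.prod hKc).image ((continuous_fst.mul continuous_const).mul continuous_snd)
  constructor
  · exact HasCompactSupport.intro hDcomp (fun x hx => Set.indicator_of_notMem hx _)
  · intro k₁ hk₁ k₂ hk₂ x
    have hmem : k₁ * x * k₂ ∈ dcoset K g ↔ x ∈ dcoset K g := by
      constructor
      · rintro ⟨a, ha, b, hb, hab⟩
        refine ⟨k₁⁻¹ * a, K.mul_mem (K.inv_mem hk₁) ha, b * k₂⁻¹,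
          K.mul_mem hb (K.inv_mem hk₂), ?_⟩
        have : x = k₁⁻¹ * (k₁ * x * k₂) * k₂⁻¹ := by group
        rw [this, hab]; group
      · rintro ⟨a, ha, b, hb, rfl⟩
        exact ⟨k₁ * a, K.mul_mem hk₁ ha, b * k₂, K.mul_mem hb hk₂, by group⟩
    by_cases hx : x ∈ dcoset K g
    · rw [Set.indicator_of_mem hx, Set.indicator_of_mem (hmem.mpr hx)]
    · rw [Set.indicator_of_notMem hx, Set.indicator_of_notMem (fun h => hx (hmem.mp h))]

lemma kavg_heckeAct [T2Space G] (hKo : IsOpen (K : Set G)) (hKc : IsCompact (K : Set G))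
    (hsm : ∀ v : V, IsOpen {g : G | π g v = v}) {W : Submodule ℂ V}
    (hWle : W ≤ fixedSub π K)
    (hWhecke : ∀ f ∈ heckeSet K, ∀ v ∈ W, heckeAct π K f v ∈ W)
    (g : G) {w : V} (hw : w ∈ W) : kavg π K (π g w) ∈ W := by
  have hwfix : w ∈ fixedSub π K := hWle hw
  set Gc : Subgroup G := K.map (MulAut.conj g).toMonoidHom with hGc
  have hGcmem : ∀ x : G, x ∈ Gc ↔ ∃ k ∈ K, g * k * g⁻¹ = x := by
    intro x
    rw [hGc, Subgroup.mem_map]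
    simp [MulAut.conj_apply]
  have hGcopen : IsOpen (Gc : Set G) := by
    have : (Gc : Set G) =
        ((Homeomorph.mulLeft g).trans (Homeomorph.mulRight g⁻¹)) '' (K : Set G) := by
      ext x
      simp only [Subgroup.coe_map, Set.mem_image, Homeomorph.trans_apply,
        Homeomorph.coe_mulLeft, Homeomorph.coe_mulRight]
      rfl
    rw [this]
    exact (Homeomorph.isOpen_image _).mpr hKo
  set s : Subgroup K := Gc.subgroupOf K with hs
  have hsopen : IsOpen (s : Set K) := Subgroup.subgroupOf_isOpen K Gc hGcopen
  haveI := finQuot hKc hsopen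
  have hfix : ∀ x : K, x ∈ s → π (x : G) (π g w) = π g w := by
    intro x hx
    obtain ⟨k, hk, hkx⟩ := (hGcmem _).mp (Subgroup.mem_subgroupOf.mp hx)
    rw [← Module.End.mul_apply, ← map_mul]
    have hxg : (x : G) * g = g * k := by rw [← hkx]; group
    rw [hxg, map_mul, Module.End.mul_apply, hwfix k hk]
  -- the comparison map between coset spaces
  set Φ : K ⧸ s → G ⧸ K := fun c => QuotientGroup.mk ((Quotient.out c : K) * g) with hΦ
  have hΦinj : Function.Injective Φ := by
    intro c c' h
    rw [hΦ] at h
    simp only at h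
    rw [QuotientGroup.eq] at h
    have hel : (Quotient.out c)⁻¹ * Quotient.out c' ∈ s := by
      refine Subgroup.mem_subgroupOf.mpr ?_
      refine (hGcmem _).mpr ⟨g⁻¹ * ((Quotient.out c : K) : G)⁻¹ * (Quotient.out c' : K) * g, ?_,
        by rw [Subgroup.coe_mul, Subgroup.coe_inv]; group⟩
      have : ((Quotient.out c : K) * g)⁻¹ * ((Quotient.out c' : K) * g)
          = g⁻¹ * ((Quotient.out c : K) : G)⁻¹ * (Quotient.out c' : K) * g := by group
      rwa [this] at h
    have heq := QuotientGroup.eq.mpr hel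
    exact (Quotient.out_eq c).symm.trans (heq.trans (Quotient.out_eq c'))
  -- identify the Hecke sum with the averaging sum
  have hkey : heckeAct π K ((dcoset K g).indicator (fun _ => (1 : ℂ))) w
      = qsum π K s (π g w) := by
    set fD := (dcoset K g).indicator (fun _ => (1 : ℂ)) with hfD
    set h' : G ⧸ K → V := fun c => fD (Quotient.out c) • π (Quotient.out c) w with hh'
    have hsupp : ∀ c : G ⧸ K, h' c ≠ 0 → c ∈ Set.range Φ := by
      intro c hc
      have hD : Quotient.out c ∈ dcoset K g := by
        by_contra hD
        apply hc
        rw [hh']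
        simp [hfD, Set.indicator_of_notMem hD]
      obtain ⟨k₁, hk₁, k₂, hk₂, hout⟩ := hD
      refine ⟨QuotientGroup.mk (⟨k₁, hk₁⟩ : K), ?_⟩
      rw [hΦ]
      simp only
      set y : K := Quotient.out (QuotientGroup.mk (⟨k₁, hk₁⟩ : K) : K ⧸ s) with hy
      have h1 : (QuotientGroup.mk y : K ⧸ s) = QuotientGroup.mk (⟨k₁, hk₁⟩ : K) :=
        Quotient.out_eq _
      rw [QuotientGroup.eq] at h1
      obtain ⟨κ, hκ, hκy⟩ := (hGcmem _).mp (Subgroup.mem_subgroupOf.mp h1)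
      -- hκy : g * κ * g⁻¹ = ↑(y⁻¹ * ⟨k₁⟩)  i.e.  ↑y⁻¹ * k₁
      have hyg : (y : G) * g = k₁ * g * κ⁻¹ := by
        have : (y : G)⁻¹ * k₁ = g * κ * g⁻¹ := by
          rw [hκy]; rfl
        have hy' : (y : G) = k₁ * (g * κ * g⁻¹)⁻¹ := by
          rw [← this]; group
        rw [hy']; group
      rw [hyg]
      have e1 : (QuotientGroup.mk (k₁ * g * κ⁻¹) : G ⧸ K) = QuotientGroup.mk (k₁ * g) :=
        QuotientGroup.mk_mul_of_mem _ (K.inv_mem hκ)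
      have e2 : (QuotientGroup.mk (Quotient.out c) : G ⧸ K) = c := Quotient.out_eq _
      rw [e1, ← e2, hout]
      exact (QuotientGroup.mk_mul_of_mem _ hk₂).symm
    -- restrict the sum to the range of Φ
    have e0 : heckeAct π K fD w = ∑ᶠ c, h' c := rfl
    have e1 : (∑ᶠ c ∈ Set.univ, h' c) = ∑ᶠ c ∈ Set.range Φ, h' c :=
      finsum_mem_inter_support_eq' _ _ _
        (fun x hx => ⟨fun _ => hsupp x hx, fun _ => Set.mem_univ x⟩)
    rw [e0, ← finsum_mem_univ h', e1, finsum_mem_range hΦinj]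
    unfold qsum
    refine finsum_congr fun x => ?_
    show fD (Quotient.out (Φ x)) • π (Quotient.out (Φ x)) w = _
    rw [hΦ]
    simp only
    set z : G := Quotient.out (QuotientGroup.mk ((Quotient.out x : K) * g) : G ⧸ K) with hz
    have h1 : (QuotientGroup.mk z : G ⧸ K) = QuotientGroup.mk ((Quotient.out x : K) * g) :=
      Quotient.out_eq _
    rw [QuotientGroup.eq] at h1
    set κ : G := ((Quotient.out x : K) * g)⁻¹ * z with hκ
    have hκK : κ ∈ K := by
      rw [hκ]
      have := K.inv_mem h1
      simpa [mul_assoc, mul_inv_rev] using this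
    have hzeq : z = (Quotient.out x : K) * g * κ := by rw [hκ]; group
    have hzD : z ∈ dcoset K g := ⟨(Quotient.out x : K), (Quotient.out x : K).2, κ, hκK, hzeq⟩
    have hfD1 : fD z = 1 := by
      rw [hfD]
      exact Set.indicator_of_mem hzD _
    rw [hfD1, one_smul, hzeq]
    show π ((((Quotient.out x : K) : G) * g) * κ) w = _
    rw [map_mul, Module.End.mul_apply, hwfix κ hκK, map_mul, Module.End.mul_apply]
  -- conclude
  have havg := kavg_indep π hKc hsm hsopen hfix
  rw [← havg]
  unfold qavg
  rw [← hkey]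
  exact Submodule.smul_mem _ _
    (hWhecke _ (indicator_mem_heckeSet hKc g) w hw)

end Link

section Main

variable [TopologicalSpace G] [IsTopologicalGroup G] (π : G →* (V →ₗ[ℂ] V))
variable {K : Subgroup G}

lemma heckeAct_mem_of_stable (hKo : IsOpen (K : Set G)) {W : Submodule ℂ V}
    (hWst : ∀ g : G, ∀ v ∈ W, π g v ∈ W) {f : G → ℂ} (hf : HasCompactSupport f)
    {v : V} (hvW : v ∈ W) : heckeAct π K f v ∈ W := by
  have hfin := hecke_support_finite π hKo hf v
  rw [heckeAct, finsum_eq_sum _ hfin]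
  exact Submodule.sum_mem _ (fun c _ => Submodule.smul_mem _ _ (hWst _ _ hvW))

lemma tdlc_t2 (G : Type*) [Group G] [TopologicalSpace G] [IsTopologicalGroup G]
    [TotallyDisconnectedSpace G] : T2Space G := by
  have hT1 : T1Space G := IsTopologicalGroup.t1Space G
    (by rw [← totallyDisconnectedSpace_iff_connectedComponent_singleton.mp ‹_› (1 : G)]
        exact isClosed_connectedComponent)
  exact IsTopologicalGroup.t2Space_iff_one_closed.mpr isClosed_singleton


end Main
end Machinery

/-- A smooth representation of a tdlc group is algebraically
irreducible iff for every compact open subgroup `K` with `V^K ≠ 0`, the space of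
`K`-invariant vectors is an algebraically irreducible `H_K(G)`-module. -/
theorem smooth_irreducible_iff_hecke_irreducible {G V : Type*} [Group G]
    [TopologicalSpace G] [IsTopologicalGroup G] [LocallyCompactSpace G]
    [TotallyDisconnectedSpace G] [AddCommGroup V] [Module ℂ V] [Nontrivial V]
    (π : G →* (V →ₗ[ℂ] V))
    (hsmooth : ∀ v : V, IsOpen {g : G | π g v = v}) :
    (∀ W : Submodule ℂ V, (∀ g : G, ∀ v ∈ W, π g v ∈ W) → W = ⊥ ∨ W = ⊤) ↔
    (∀ K : Subgroup G, IsOpen (K : Set G) → IsCompact (K : Set G) →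
      fixedSub π K ≠ ⊥ →
      ∀ W : Submodule ℂ V, W ≤ fixedSub π K →
        (∀ f ∈ heckeSet K, ∀ v ∈ W, heckeAct π K f v ∈ W) →
        W = ⊥ ∨ W = fixedSub π K) := by

  have hT2 : T2Space G := tdlc_t2 G
  constructor
  · intro hirr K hKo hKc _hne W hWle hWhecke
    by_cases hbot : W = ⊥
    · exact Or.inl hbot
    right
    obtain ⟨w, hwW, hw0⟩ := (Submodule.ne_bot_iff W).mp hbot
    set S : Set V := {u | ∃ g : G, ∃ x ∈ W, u = π g x} with hS
    have hstab : ∀ g : G, ∀ v ∈ Submodule.span ℂ S, π g v ∈ Submodule.span ℂ S := by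
      intro g v hv
      have h1 : π g v ∈ Submodule.map (π g) (Submodule.span ℂ S) :=
        Submodule.mem_map_of_mem hv
      rw [Submodule.map_span] at h1
      refine Submodule.span_le.mpr ?_ h1
      rintro _ ⟨u, ⟨h, x, hx, rfl⟩, rfl⟩
      refine Submodule.subset_span ⟨g * h, x, hx, ?_⟩
      rw [map_mul, Module.End.mul_apply]
    have hwS : w ∈ Submodule.span ℂ S :=
      Submodule.subset_span ⟨1, w, hwW, by simp⟩
    have htop : Submodule.span ℂ S = ⊤ := by
      rcases hirr _ hstab with h | h
      · exact absurd (h ▸ hwS) (by simpa using hw0)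
      · exact h
    refine le_antisymm hWle ?_
    intro v hv
    have hvspan : v ∈ Submodule.span ℂ S := htop ▸ Submodule.mem_top
    have hkavg : kavg π K v ∈ W := by
      refine Submodule.span_induction ?_ ?_ ?_ ?_ hvspan
      · rintro u ⟨g, x, hx, rfl⟩
        exact kavg_heckeAct π hKo hKc hsmooth hWle hWhecke g hx
      · rw [kavg_zero π hKc hsmooth]; exact W.zero_mem
      · intro a b _ _ ha hb
        rw [kavg_add π hKc hsmooth]; exact W.add_mem ha hb
      · intro a x _ hx
        rw [kavg_smul π hKc hsmooth]; exact W.smul_mem a hx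
    rwa [kavg_of_mem_fixed π hKc hsmooth hv] at hkavg
  · intro hK W hWst
    by_cases hbot : W = ⊥
    · exact Or.inl hbot
    right
    obtain ⟨w, hwW, hw0⟩ := (Submodule.ne_bot_iff W).mp hbot
    rw [Submodule.eq_top_iff']
    intro v
    have hO : IsOpen ({g : G | π g w = w} ∩ {g : G | π g v = v}) :=
      (hsmooth w).inter (hsmooth v)
    have h1O : (1 : G) ∈ {g : G | π g w = w} ∩ {g : G | π g v = v} := by
      constructor <;> simp
    obtain ⟨K, hKo, hKc, hKsub⟩ := exists_compactOpen_subgroup hO h1O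
    have hwfix : w ∈ fixedSub π K := fun k hk => (hKsub hk).1
    have hvfix : v ∈ fixedSub π K := fun k hk => (hKsub hk).2
    have hne : fixedSub π K ≠ ⊥ := by
      intro h
      exact hw0 (Submodule.mem_bot ℂ |>.mp (h ▸ hwfix))
    have hW'le : W ⊓ fixedSub π K ≤ fixedSub π K := inf_le_right
    have hW'hecke : ∀ f ∈ heckeSet K, ∀ u ∈ W ⊓ fixedSub π K,
        heckeAct π K f u ∈ W ⊓ fixedSub π K := by
      intro f hf u hu
      exact ⟨heckeAct_mem_of_stable π hKo hWst hf.1 hu.1,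
        heckeAct_mem_fixed π hKo hf hu.2⟩
    rcases hK K hKo hKc hne _ hW'le hW'hecke with h | h
    · exact absurd (Submodule.mem_bot ℂ |>.mp (h ▸ ⟨hwW, hwfix⟩)) hw0
    · have hv' : v ∈ W ⊓ fixedSub π K := by rw [h]; exact hvfix
      exact hv'.1
end

section
/- Let G be a tdlc group and (π, H) a unitary, admissible, topologically irreducible representation of G. Then the underlying smooth representation (π, H^∞) on the space of smooth vectors is algebraically irreducible. -/
open scoped ComplexInnerProductSpace

open MeasureTheory

/-- The submodule of `K`-invariant vectors of a unitary representation. -/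
def fixedSubU {G : Type*} [Group G] [TopologicalSpace G] (π : UnitaryRep G)
    (K : Subgroup G) : Submodule ℂ π.carrier where
  carrier := {v | ∀ k ∈ K, π.ρ k v = v}
  add_mem' := by
    intro a b ha hb k hk
    simp [map_add, ha k hk, hb k hk]
  zero_mem' := by
    intro k hk
    simp
  smul_mem' := by
    intro c v hv k hk
    simp [_root_.map_smul, hv k hk]

section VanDantzig
open scoped Pointwise

/-- van Dantzig: in a tdlc group, every open neighborhood of `1` contains a
compact open subgroup. -/
theorem vanDantzigAux {G : Type*} [Group G] [TopologicalSpace G] [IsTopologicalGroup G]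
    [LocallyCompactSpace G] [TotallyDisconnectedSpace G] {U : Set G} (hU : IsOpen U)
    (h1 : (1 : G) ∈ U) :
    ∃ K : Subgroup G, IsOpen (K : Set G) ∧ IsCompact (K : Set G) ∧ (K : Set G) ⊆ U := by
  haveI : T2Space G := by
    exact IsTopologicalGroup.t2Space_iff_one_closed.mpr isClosed_singleton
  obtain ⟨s, scomp, h1s, hsU⟩ := exists_compact_subset hU h1
  obtain ⟨V, hVclopen, h1V, hVsub⟩ :=
    loc_compact_Haus_tot_disc_of_zero_dim.mem_nhds_iff.1 (isOpen_interior.mem_nhds h1s)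
  have hVcomp : IsCompact V :=
    scomp.of_isClosed_subset hVclopen.isClosed (hVsub.trans interior_subset)
  -- there is `T ∈ 𝓝 1` with `V * T ⊆ V`
  have hT : ∃ T ∈ nhds (1 : G), V * T ⊆ V := by
    apply hVcomp.induction_on (p := fun S ↦ ∃ T ∈ nhds (1 : G), S * T ⊆ V)
      ⟨Set.univ, by simp only [Filter.univ_mem, Set.empty_mul, Set.empty_subset, and_self]⟩
      (fun _ _ huv ⟨T, hT, mem⟩ ↦ ⟨T, hT, (Set.mul_subset_mul_right huv).trans mem⟩)
      fun U' V' ⟨T₁, hT₁, mem1⟩ ⟨T₂, hT₂, mem2⟩ ↦ ⟨T₁ ∩ T₂, Filter.inter_mem hT₁ hT₂, by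
        rw [Set.union_mul]
        exact Set.union_subset
          ((Set.mul_subset_mul_left Set.inter_subset_left).trans mem1)
          ((Set.mul_subset_mul_left Set.inter_subset_right).trans mem2)⟩
    intro x memW
    have : (x, 1) ∈ (fun p : G × G ↦ p.1 * p.2) ⁻¹' V := by simpa using memW
    rcases isOpen_prod_iff.mp (continuous_mul.isOpen_preimage V hVclopen.2) x 1 this with
      ⟨U', V', Uopen, Vopen, xmemU, onememV, prodsub⟩
    have h6 : U' * V' ⊆ V :=
      Set.mul_subset_iff.mpr fun _ hx _ hy ↦ prodsub (Set.mk_mem_prod hx hy)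
    exact ⟨U' ∩ V, ⟨U', Uopen.mem_nhds xmemU, V, fun _ a ↦ a, rfl⟩,
      V', Vopen.mem_nhds onememV,
      fun _ a ↦ h6 ((Set.mul_subset_mul_right Set.inter_subset_left) a)⟩
  obtain ⟨T, Tnhds, hmul⟩ := hT
  rcases mem_nhds_iff.mp Tnhds with ⟨O, OsubT, Oopen, onememO⟩
  set Y : Set G := O ∩ O⁻¹ with hY
  have Yopen : IsOpen Y := Oopen.inter Oopen.inv
  have Ynhd : (1 : G) ∈ Y := ⟨onememO, by simpa using onememO⟩
  have Yinv : Y⁻¹ = Y := by simp [hY, Set.inter_comm]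
  have Ymul : V * Y ⊆ V := fun a ha ↦
    hmul (Set.mul_subset_mul_left (Set.inter_subset_left.trans OsubT) ha)
  let S : Subgroup G :=
    { carrier := ⋃ n, Y ^ (n + 1)
      mul_mem' := fun ha hb ↦ by
        rcases Set.mem_iUnion.mp ha with ⟨k, hk⟩
        rcases Set.mem_iUnion.mp hb with ⟨l, hl⟩
        apply Set.mem_iUnion.mpr
        use k + 1 + l
        rw [add_assoc, pow_add]
        exact Set.mul_mem_mul hk hl
      one_mem' := by
        apply Set.mem_iUnion.mpr
        use 0
        simpa using Ynhd
      inv_mem' := fun ha ↦ by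
        rcases Set.mem_iUnion.mp ha with ⟨k, hk⟩
        apply Set.mem_iUnion.mpr
        use k
        rw [← Yinv]
        simpa only [inv_pow, Set.mem_inv, inv_inv] using hk }
  have Sopen : IsOpen (S : Set G) := by
    refine isOpen_iUnion fun n ↦ ?_
    rw [pow_succ]
    exact Yopen.mul_left
  have mulVpow : ∀ n : ℕ, V * Y ^ (n + 1) ⊆ V := by
    intro n
    induction' n with n ih
    · simpa using Ymul
    · rw [pow_succ, ← mul_assoc]
      exact (Set.mul_subset_mul_right ih).trans Ymul
  have hpow : ∀ n : ℕ, Y ^ (n + 1) ⊆ V * Y ^ (n + 1) := by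
    intro n x xin
    rw [Set.mem_mul]
    exact ⟨1, h1V, x, xin, one_mul x⟩
  have hSV : (S : Set G) ⊆ V := Set.iUnion_subset fun i _ a ↦ mulVpow i (hpow i a)
  have Sclosed : IsClosed (S : Set G) := S.isClosed_of_isOpen Sopen
  have Scomp : IsCompact (S : Set G) := hVcomp.of_isClosed_subset Sclosed hSV
  exact ⟨S, Sopen, Scomp, hSV.trans ((hVsub.trans interior_subset).trans hsU)⟩
end VanDantzig

/-- The stabilizer of a vector, as a subgroup. -/
def stabU {G : Type*} [Group G] [TopologicalSpace G] (π : UnitaryRep G)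
    (v : π.carrier) : Subgroup G where
  carrier := {g | π.ρ g v = v}
  one_mem' := π.map_one' v
  mul_mem' := by
    intro a b ha hb
    simp only [Set.mem_setOf_eq] at *
    rw [π.map_mul', hb, ha]
  inv_mem' := by
    intro a ha
    simp only [Set.mem_setOf_eq] at *
    have := π.map_mul' a⁻¹ a v
    rw [inv_mul_cancel, π.map_one', ha] at this
    exact this.symm


/-- An admissible, topologically irreducible unitary representation
of a tdlc group has algebraically irreducible underlying smooth representation. -/
theorem admissible_irreducible_smooth_part_irreducible {G : Type*} [Group G]
    [TopologicalSpace G] [IsTopologicalGroup G] [LocallyCompactSpace G]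
    [TotallyDisconnectedSpace G]
    (π : UnitaryRep G)
    (hadm : ∀ K : Subgroup G, IsOpen (K : Set G) → IsCompact (K : Set G) →
      FiniteDimensional ℂ (fixedSubU π K))
    (hirr : π.IsIrreducible) :
    ∀ W : Submodule ℂ π.carrier,
      (W : Set π.carrier) ⊆ {v : π.carrier | IsOpen {g : G | π.ρ g v = v}} →
      (∀ g : G, ∀ v ∈ W, π.ρ g v ∈ W) →
      W = ⊥ ∨ (W : Set π.carrier) = {v : π.carrier | IsOpen {g : G | π.ρ g v = v}} := by
  
  intro W hsm hinv
  by_cases hW : W = ⊥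
  · exact Or.inl hW
  right
  -- W is dense
  have hdense : Dense (W : Set π.carrier) := by
    have hclos : ∀ g : G, ∀ w ∈ W.topologicalClosure, π.ρ g w ∈ W.topologicalClosure := by
      intro g w hw
      have hw' : w ∈ closure (W : Set π.carrier) := hw
      have : π.ρ g w ∈ closure (π.ρ g '' (W : Set π.carrier)) :=
        map_mem_closure (π.ρ g).continuous hw' (Set.mapsTo_image _ _)
      refine closure_mono ?_ this
      rintro _ ⟨x, hx, rfl⟩
      exact hinv g x hx
    rcases hirr.2 W.topologicalClosure W.isClosed_topologicalClosure hclos with h | h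
    · exact absurd (le_bot_iff.mp (h ▸ W.le_topologicalClosure)) hW
    · have : (W.topologicalClosure : Set π.carrier) = Set.univ := by
        rw [h]; rfl
      rw [Submodule.topologicalClosure_coe] at this
      exact dense_iff_closure_eq.mpr this
  apply Set.Subset.antisymm hsm
  intro v hv
  have hv' : IsOpen {g : G | π.ρ g v = v} := hv
  obtain ⟨K, hKopen, hKcomp, hKsub⟩ := vanDantzigAux hv' (π.map_one' v)
  have hvF : v ∈ fixedSubU π K := fun k hk => hKsub hk
  haveI : FiniteDimensional ℂ (fixedSubU π K) := hadm K hKopen hKcomp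
  haveI : CompactSpace ↥K := isCompact_iff_compactSpace.mp hKcomp
  set F := fixedSubU π K with hF
  haveI : FiniteDimensional ℂ ↥(W ⊓ F) :=
    Submodule.finiteDimensional_of_le (inf_le_right : W ⊓ F ≤ F)
  have hWFclosed : IsClosed ((W ⊓ F : Submodule ℂ π.carrier) : Set π.carrier) :=
    Submodule.closed_of_finiteDimensional _
  -- approximate v by elements of W ⊓ F
  have happrox : v ∈ closure ((W ⊓ F : Submodule ℂ π.carrier) : Set π.carrier) := by
    rw [Metric.mem_closure_iff]
    intro ε hε
    obtain ⟨w, hwW, hwv⟩ := Metric.mem_closure_iff.mp (hdense v) ε hε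
    -- stabilizer of w inside K
    set L : Subgroup ↥K := (stabU π w).subgroupOf K with hL
    have hLopen : IsOpen (L : Set ↥K) := by
      have : (L : Set ↥K) = ((↑) : ↥K → G) ⁻¹' {g : G | π.ρ g w = w} := rfl
      rw [this]
      exact (hsm hwW).preimage continuous_subtype_val
    haveI : Finite (↥K ⧸ L) := L.quotient_finite_of_isOpen hLopen
    haveI : Fintype (↥K ⧸ L) := Fintype.ofFinite _
    -- the averaging function
    have hresp : ∀ a b : ↥K, a⁻¹ * b ∈ L → π.ρ ↑a w = π.ρ ↑b w := by
      intro a b hab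
      have hmem : π.ρ ((↑(a⁻¹ * b) : G)) w = w := (Subgroup.mem_subgroupOf.mp hab : _)
      have : π.ρ (↑b : G) w = π.ρ ((↑a : G) * ↑(a⁻¹ * b)) w := by
        congr 1
        push_cast
        group
      rw [this, π.map_mul', hmem]
    let f : ↥K ⧸ L → π.carrier := fun q => Quotient.liftOn' q (fun k => π.ρ ↑k w)
      (fun a b hab => hresp a b (QuotientGroup.leftRel_apply.mp hab))
    have hf_mk : ∀ k : ↥K, f (QuotientGroup.mk k) = π.ρ ↑k w := fun k => rfl
    set n := Fintype.card (↥K ⧸ L) with hn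
    have hnpos : 0 < n := Fintype.card_pos_iff.mpr ⟨QuotientGroup.mk 1⟩
    have hnne : ((n : ℂ)) ≠ 0 := Nat.cast_ne_zero.mpr hnpos.ne'
    set u := ((n : ℂ))⁻¹ • ∑ q : ↥K ⧸ L, f q with hu
    -- u ∈ W
    have huW : u ∈ W := by
      refine W.smul_mem _ (Submodule.sum_mem W fun q _ => ?_)
      induction q using Quotient.inductionOn' with
      | h k => exact hinv (↑k) w hwW
    -- u ∈ F
    have huF : u ∈ F := by
      intro k0 hk0
      have hperm : ∀ q : ↥K ⧸ L, π.ρ k0 (f q) = f ((⟨k0, hk0⟩ : ↥K) • q) := by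
        intro q
        induction q using Quotient.inductionOn' with
        | h k =>
          have : (⟨k0, hk0⟩ : ↥K) • (QuotientGroup.mk k : ↥K ⧸ L) =
              QuotientGroup.mk ((⟨k0, hk0⟩ : ↥K) * k) :=
            MulAction.Quotient.smul_mk L _ k
          rw [this, hf_mk, hf_mk]
          have : ((↑((⟨k0, hk0⟩ : ↥K) * k) : G)) = k0 * ↑k := rfl
          rw [this, π.map_mul']
      rw [hu, _root_.map_smul, map_sum]
      congr 1
      rw [Finset.sum_congr rfl fun q _ => hperm q]
      exact Equiv.sum_comp (MulAction.toPerm (⟨k0, hk0⟩ : ↥K)) f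
    -- ‖u - v‖ ≤ ‖w - v‖
    have hterm : ∀ q : ↥K ⧸ L, ‖f q - v‖ = ‖w - v‖ := by
      intro q
      induction q using Quotient.inductionOn' with
      | h k =>
        rw [hf_mk]
        have hkv : π.ρ ↑k v = v := hKsub k.2
        calc ‖π.ρ ↑k w - v‖ = ‖π.ρ ↑k w - π.ρ ↑k v‖ := by rw [hkv]
          _ = ‖π.ρ ↑k (w - v)‖ := by rw [map_sub]
          _ = ‖w - v‖ := (π.ρ ↑k).norm_map _
    have hsumv : (∑ _q : ↥K ⧸ L, v) = (n : ℂ) • v := by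
      rw [Finset.sum_const, Finset.card_univ, ← hn, Nat.cast_smul_eq_nsmul]
    have huv : u - v = ((n : ℂ))⁻¹ • ∑ q : ↥K ⧸ L, (f q - v) := by
      rw [Finset.sum_sub_distrib, hsumv, smul_sub, ← hu, inv_smul_smul₀ hnne]
    have hnorm : ‖u - v‖ ≤ ‖w - v‖ := by
      rw [huv, norm_smul]
      have h1 : ‖∑ q : ↥K ⧸ L, (f q - v)‖ ≤ ∑ q : ↥K ⧸ L, ‖f q - v‖ :=
        norm_sum_le _ _
      have h2 : (∑ q : ↥K ⧸ L, ‖f q - v‖) = n * ‖w - v‖ := by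
        rw [Finset.sum_congr rfl fun q _ => hterm q, Finset.sum_const, Finset.card_univ,
          ← hn, nsmul_eq_mul]
      have h3 : ‖((n : ℂ))⁻¹‖ = (n : ℝ)⁻¹ := by
        rw [norm_inv, Complex.norm_natCast]
      rw [h3]
      calc (n : ℝ)⁻¹ * ‖∑ q : ↥K ⧸ L, (f q - v)‖ ≤ (n : ℝ)⁻¹ * (n * ‖w - v‖) := by
            rw [h2] at h1
            exact mul_le_mul_of_nonneg_left h1 (by positivity)
        _ = ‖w - v‖ := by
            field_simp
    refine ⟨u, ⟨huW, huF⟩, ?_⟩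
    have : dist v u = ‖u - v‖ := by rw [dist_comm, dist_eq_norm]
    rw [this]
    refine lt_of_le_of_lt hnorm ?_
    rw [dist_eq_norm] at hwv
    rwa [norm_sub_rev]
  have : v ∈ (W ⊓ F : Submodule ℂ π.carrier) := by
    rwa [hWFclosed.closure_eq] at happrox
  exact this.1
end

section
/- Let G be a locally compact group and G⁺ ≤ G an open normal subgroup of finite index, and let π be a unitary representation of G with 1 ≺ π|_{G⁺}. Then there exists a unitary representation ρ of G (namely ρ = L²(G/G⁺)) such that 1 ≺ π ⊗ ρ. -/
open scoped ComplexInnerProductSpace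

open MeasureTheory

section FIAux

open UnitaryRep

variable {G : Type*} [Group G] [TopologicalSpace G] [IsTopologicalGroup G]
variable (N : Subgroup G) [N.Normal]
variable {k : ℕ} (e : G ⧸ N ≃ Fin k)

/-- The permutation of `Fin k` induced by left translation by `g` on `G ⧸ N`. -/
noncomputable def fiPerm (g : G) : Fin k ≃ Fin k where
  toFun j := e (QuotientGroup.mk g * e.symm j)
  invFun j := e ((QuotientGroup.mk g : G ⧸ N)⁻¹ * e.symm j)
  left_inv j := by simp [← mul_assoc]
  right_inv j := by simp [← mul_assoc]

lemma fiPerm_symm_apply (g : G) (j : Fin k) :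
    (fiPerm N e g).symm j = e ((QuotientGroup.mk g : G ⧸ N)⁻¹ * e.symm j) := rfl

lemma fiPerm_symm_one (j : Fin k) : (fiPerm N e (1 : G)).symm j = j := by
  simp [fiPerm_symm_apply]

lemma fiPerm_symm_mul (g h : G) (j : Fin k) :
    (fiPerm N e (g * h)).symm j = (fiPerm N e h).symm ((fiPerm N e g).symm j) := by
  simp [fiPerm_symm_apply, mul_assoc]

instance fiCompleteSpace (p : ENNReal) {ι : Type*} [Fintype ι] (β : ι → Type*)
    [∀ i, UniformSpace (β i)] [∀ i, CompleteSpace (β i)] : CompleteSpace (PiLp p β) :=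
  inferInstance

/-- The representation `π ⊗ L²(G/N)`, realized on `Fin k`-indexed tuples of
vectors of `π`. -/
noncomputable def fiRep (hopen : IsOpen (N : Set G)) (π : UnitaryRep G) : UnitaryRep G where
  carrier := PiLp 2 (fun _ : Fin k => π.carrier)
  ρ g := (LinearIsometryEquiv.piLpCongrLeft 2 ℂ π.carrier (fiPerm N e g)).trans
    (LinearIsometryEquiv.piLpCongrRight 2 fun _ : Fin k => π.ρ g)
  map_one' w := by
    ext j
    show π.ρ 1 (w ((fiPerm N e (1 : G)).symm j)) = w j
    rw [fiPerm_symm_one, π.map_one']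
  map_mul' g h w := by
    ext j
    show π.ρ (g * h) (w ((fiPerm N e (g * h)).symm j)) =
      π.ρ g (π.ρ h (w ((fiPerm N e h).symm ((fiPerm N e g).symm j))))
    rw [fiPerm_symm_mul, π.map_mul']
  continuous_orbit w := by
    have : Continuous fun g : G => (fun j => π.ρ g (w ((fiPerm N e g).symm j)) :
        ∀ _ : Fin k, π.carrier) := by
      refine continuous_pi fun j => ?_
      rw [continuous_iff_continuousAt]
      intro g₀
      have hU : IsOpen {g : G | g₀⁻¹ * g ∈ N} :=
        hopen.preimage (continuous_const.mul continuous_id)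
      have hmem : g₀ ∈ {g : G | g₀⁻¹ * g ∈ N} := by simpa using N.one_mem
      have heq : ∀ g ∈ {g : G | g₀⁻¹ * g ∈ N},
          (fiPerm N e g).symm j = (fiPerm N e g₀).symm j := by
        intro g hg
        have : (QuotientGroup.mk g₀ : G ⧸ N) = QuotientGroup.mk g :=
          (QuotientGroup.eq).2 hg
        simp [fiPerm_symm_apply, ← this]
      refine ContinuousAt.congr
        ((π.continuous_orbit (w ((fiPerm N e g₀).symm j))).continuousAt) ?_
      filter_upwards [hU.mem_nhds hmem] with g hg
      rw [heq g hg]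
    exact (PiLp.continuous_toLp (p := 2) (β := fun _ : Fin k => π.carrier)).comp this

lemma fiRep_rho_apply (hopen : IsOpen (N : Set G)) (π : UnitaryRep G) (g : G)
    (w : (fiRep N e hopen π).carrier) (j : Fin k) :
    (@id (PiLp 2 fun _ : Fin k => π.carrier) ((fiRep N e hopen π).ρ g w)) j = π.ρ g ((@id (PiLp 2 fun _ : Fin k => π.carrier) w) ((fiPerm N e g).symm j)) := rfl

end FIAux


lemma UnitaryRep.inner_rho_conj {G : Type*} [Group G] [TopologicalSpace G] (π : UnitaryRep G)
    (g h : G) (w w' : π.carrier) :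
    ⟪π.ρ g w, π.ρ h w'⟫ = ⟪π.ρ (h⁻¹ * g) w, w'⟫ := by
  conv_lhs => rw [show g = h * (h⁻¹ * g) by group, π.map_mul']
  exact (π.ρ h).inner_map_map _ _

open UnitaryRep in
/-- If `G⁺` is an open normal finite index subgroup and
`1 ≺ π|_{G⁺}`, then there is a unitary representation `ρ` of `G` (namely
`L²(G/G⁺)`) with `1 ≺ π ⊗ ρ`. -/
theorem finite_index_no_absorption {G : Type*} [Group G] [TopologicalSpace G]
    [IsTopologicalGroup G] [LocallyCompactSpace G]
    (N : Subgroup G) [N.Normal] (hopen : IsOpen (N : Set G)) [N.FiniteIndex]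
    (π : UnitaryRep G)
    (h : (trivialRep N).WeakContained (π.res N)) :
    ∃ ρ t : UnitaryRep G, IsTensorRep π ρ t ∧ (trivialRep G).WeakContained t := by
  classical
  obtain ⟨k, ⟨e⟩⟩ := Finite.exists_equiv_fin (G ⧸ N)
  have hk : 0 < k := (e (1 : G ⧸ N)).pos
  have hkc : (k : ℂ) ≠ 0 := Nat.cast_ne_zero.2 hk.ne'
  have hkr : (k : ℝ) ≠ 0 := Nat.cast_ne_zero.2 hk.ne'
  set ρL := fiRep N e hopen (trivialRep G) with hρL
  set τ := fiRep N e hopen π with hτdef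
  set t : π.carrier → ρL.carrier → τ.carrier :=
    fun u v => (WithLp.toLp 2 (fun j => (id ((@id (PiLp 2 fun _ : Fin k => ℂ) v) j) : ℂ) • u) : PiLp 2 fun _ : Fin k => π.carrier) with ht
  refine ⟨ρL, τ, ⟨t, ?_, ?_, ?_⟩, ?_⟩
  · -- inner products multiply
    intro u v u' v'
    have h2 : ⟪v, v'⟫ = ∑ j : Fin k, (starRingEnd ℂ) (id ((@id (PiLp 2 fun _ : Fin k => ℂ) v) j) : ℂ) * (id ((@id (PiLp 2 fun _ : Fin k => ℂ) v') j) : ℂ) :=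
      (PiLp.inner_apply _ _).trans (Finset.sum_congr rfl fun j _ => RCLike.inner_apply' _ _)
    calc ⟪t u v, t u' v'⟫
        = ∑ j : Fin k, ⟪(id ((@id (PiLp 2 fun _ : Fin k => ℂ) v) j) : ℂ) • u, (id ((@id (PiLp 2 fun _ : Fin k => ℂ) v') j) : ℂ) • u'⟫ := PiLp.inner_apply _ _
      _ = ⟪u, u'⟫ * ⟪v, v'⟫ := by
          rw [h2, Finset.mul_sum]
          refine Finset.sum_congr rfl fun j _ => ?_
          rw [inner_smul_left, inner_smul_right]
          ring
  · -- equivariance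
    intro g u v
    refine PiLp.ext fun j => ?_
    show π.ρ g ((id ((@id (PiLp 2 fun _ : Fin k => ℂ) v) ((fiPerm N e g).symm j)) : ℂ) • u)
      = (id ((@id (PiLp 2 fun _ : Fin k => ℂ) v) ((fiPerm N e g).symm j)) : ℂ) • π.ρ g u
    exact (π.ρ g).map_smul _ _
  · -- density
    have hspan : Submodule.span ℂ {w : τ.carrier | ∃ u v, w = t u v} = ⊤ := by
      rw [Submodule.eq_top_iff']
      intro F
      have hF : F = ∑ j : Fin k, t ((@id (PiLp 2 fun _ : Fin k => π.carrier) F) j)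
          (show ρL.carrier from WithLp.toLp 2 ((fun i => if i = j then (1 : ℂ) else 0) : Fin k → ℂ)) := by
        refine PiLp.ext fun i => ?_
        show (@id (PiLp 2 fun _ : Fin k => π.carrier) F) i = PiLp.projₗ (𝕜 := ℂ) (β := fun _ : Fin k => π.carrier) 2 i (∑ j : Fin k, t ((@id (PiLp 2 fun _ : Fin k => π.carrier) F) j)
          (show ρL.carrier from WithLp.toLp 2 ((fun i => if i = j then (1 : ℂ) else 0) : Fin k → ℂ)))
        rw [map_sum]
        show (@id (PiLp 2 fun _ : Fin k => π.carrier) F) i = ∑ j : Fin k, (id (if i = j then (1 : ℂ) else 0) : ℂ) • (@id (PiLp 2 fun _ : Fin k => π.carrier) F) j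
        simp
      rw [hF]
      exact Submodule.sum_mem _ fun j _ => Submodule.subset_span
        ⟨(@id (PiLp 2 fun _ : Fin k => π.carrier) F) j, (show ρL.carrier from WithLp.toLp 2 ((fun i => if i = j then (1 : ℂ) else 0) : Fin k → ℂ)), rfl⟩
    rw [hspan, Submodule.top_coe]
    exact dense_univ
  · -- weak containment of the trivial representation
    intro u v C hC ε hε
    set c : ℂ := ⟪u, v⟫ with hc
    set s : Fin k → G := fun j => (e.symm j).out with hs
    have hsk : ∀ j, (QuotientGroup.mk (s j) : G ⧸ N) = e.symm j :=
      fun j => QuotientGroup.out_eq' _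
    set T : Set G := ⋃ (i : Fin k) (j : Fin k), (fun g => (s i)⁻¹ * (g * s j)) '' C with hT
    have hTc : IsCompact T := isCompact_iUnion fun i => isCompact_iUnion fun j =>
      hC.image (continuous_const.mul (continuous_id.mul continuous_const))
    have hNclosed : IsClosed (N : Set G) := Subgroup.isClosed_of_isOpen N hopen
    have hDc : IsCompact ((Subtype.val : ↥N → G) ⁻¹' T) :=
      hNclosed.isClosedEmbedding_subtypeVal.isCompact_preimage hTc
    have hε' : ε / (‖c‖ + 1) > 0 := by positivity
    obtain ⟨n, a, b, hab⟩ := h (show (trivialRep N).carrier from (1 : ℂ))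
      (show (trivialRep N).carrier from (1 : ℂ)) _ hDc (ε / (‖c‖ + 1)) hε'
    refine ⟨n, fun p => (WithLp.toLp 2 (fun j => π.ρ (s j) (a p)) : PiLp 2 fun _ : Fin k => π.carrier),
      fun p => (WithLp.toLp 2 (fun j => (c / k) • π.ρ (s j) (b p)) : PiLp 2 fun _ : Fin k => π.carrier),
      fun g hg => ?_⟩
    have hmN : ∀ j : Fin k, (s j)⁻¹ * (g * s ((fiPerm N e g).symm j)) ∈ N := by
      intro j
      rw [← QuotientGroup.eq_one_iff]
      have hx : (QuotientGroup.mk (s ((fiPerm N e g).symm j)) : G ⧸ N)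
          = (QuotientGroup.mk g : G ⧸ N)⁻¹ * e.symm j := by
        rw [hsk, fiPerm_symm_apply, Equiv.symm_apply_apply]
      rw [QuotientGroup.mk_mul, QuotientGroup.mk_mul, QuotientGroup.mk_inv, hx, hsk]
      group
    set m : Fin k → ↥N := fun j => ⟨(s j)⁻¹ * (g * s ((fiPerm N e g).symm j)), hmN j⟩ with hm
    have hmT : ∀ j : Fin k, m j ∈ (Subtype.val : ↥N → G) ⁻¹' T := by
      intro j
      show (s j)⁻¹ * (g * s ((fiPerm N e g).symm j)) ∈ T
      exact Set.mem_iUnion.2 ⟨j, Set.mem_iUnion.2 ⟨(fiPerm N e g).symm j, ⟨g, hg, rfl⟩⟩⟩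
    have hτmc : ∀ p, τ.mc (WithLp.toLp 2 (fun j => π.ρ (s j) (a p)) : PiLp 2 fun _ : Fin k => π.carrier)
        (WithLp.toLp 2 (fun j => (c / k) • π.ρ (s j) (b p)) : PiLp 2 fun _ : Fin k => π.carrier) g
        = ∑ j : Fin k, (c / k) * (π.res N).mc (a p) (b p) (m j) := by
      intro p
      show ⟪τ.ρ g (WithLp.toLp 2 (fun j => π.ρ (s j) (a p)) : PiLp 2 fun _ : Fin k => π.carrier), _⟫ = _
      refine (PiLp.inner_apply _ _).trans ?_
      refine Finset.sum_congr rfl fun j _ => ?_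
      show ⟪π.ρ g (π.ρ (s ((fiPerm N e g).symm j)) (@id π.carrier (a p))), (c / k) • π.ρ (s j) (@id π.carrier (b p))⟫ = _
      rw [inner_smul_right, ← π.map_mul', π.inner_rho_conj]
      rfl
    have h11 : ∀ γ : ↥N, (trivialRep N).mc (show (trivialRep N).carrier from (1 : ℂ))
        (show (trivialRep N).carrier from (1 : ℂ)) γ = 1 := by
      intro γ
      show ⟪(1 : ℂ), (1 : ℂ)⟫ = 1
      rw [RCLike.inner_apply]
      simp
    have hbound : ∀ j : Fin k,
        ‖1 - ∑ p, (π.res N).mc (a p) (b p) (m j)‖ ≤ ε / (‖c‖ + 1) := by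
      intro j
      have := hab (m j) (hmT j)
      rwa [h11] at this
    have hmc : (trivialRep G).mc u v g = c := rfl
    have hswap : ∑ p, τ.mc (WithLp.toLp 2 (fun j => π.ρ (s j) (a p)) : PiLp 2 fun _ : Fin k => π.carrier)
        (WithLp.toLp 2 (fun j => (c / k) • π.ρ (s j) (b p)) : PiLp 2 fun _ : Fin k => π.carrier) g
        = ∑ j : Fin k, (c / k) * ∑ p, (π.res N).mc (a p) (b p) (m j) := by
      simp only [hτmc]
      rw [Finset.sum_comm]
      simp [Finset.mul_sum]
    have h1 : ∑ _j : Fin k, (c / k) = c := by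
      rw [Finset.sum_const, Finset.card_univ, Fintype.card_fin, nsmul_eq_mul,
        mul_comm, div_mul_cancel₀ c hkc]
    have hsplit : (trivialRep G).mc u v g - ∑ p,
        τ.mc (WithLp.toLp 2 (fun j => π.ρ (s j) (a p)) : PiLp 2 fun _ : Fin k => π.carrier)
        (WithLp.toLp 2 (fun j => (c / k) • π.ρ (s j) (b p)) : PiLp 2 fun _ : Fin k => π.carrier) g
        = ∑ j : Fin k, (c / k) * (1 - ∑ p, (π.res N).mc (a p) (b p) (m j)) := by
      rw [hmc, hswap]
      have heq2 : ∑ j : Fin k, (c / k) * (1 - ∑ p, (π.res N).mc (a p) (b p) (m j))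
          = (∑ _j : Fin k, (c / k))
            - ∑ j : Fin k, (c / k) * ∑ p, (π.res N).mc (a p) (b p) (m j) := by
        rw [← Finset.sum_sub_distrib]
        exact Finset.sum_congr rfl fun j _ => by ring
      rw [heq2, h1]
    rw [hsplit]
    have hck : ‖c / (k : ℂ)‖ = ‖c‖ / k := by
      rw [norm_div]
      norm_num
    calc ‖∑ j : Fin k, (c / k) * (1 - ∑ p, (π.res N).mc (a p) (b p) (m j))‖
        ≤ ∑ j : Fin k, ‖(c / k) * (1 - ∑ p, (π.res N).mc (a p) (b p) (m j))‖ :=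
          norm_sum_le _ _
      _ ≤ ∑ _j : Fin k, (‖c‖ / k) * (ε / (‖c‖ + 1)) := by
          refine Finset.sum_le_sum fun j _ => ?_
          rw [norm_mul, hck]
          exact mul_le_mul_of_nonneg_left (hbound j) (by positivity)
      _ = ‖c‖ * (ε / (‖c‖ + 1)) := by
          rw [Finset.sum_const, Finset.card_univ, Fintype.card_fin, nsmul_eq_mul,
            ← mul_assoc, mul_comm (k : ℝ) (‖c‖ / k), div_mul_cancel₀ _ hkr]
      _ ≤ ε := by
          rw [div_eq_mul_inv, ← mul_assoc,
            show ‖c‖ * ε * (‖c‖ + 1)⁻¹ = (‖c‖ * ε) / (‖c‖ + 1) by ring,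
            div_le_iff₀ (by positivity)]
          nlinarith [norm_nonneg c, hε.le]
end
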